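/- Let F be a finite field with q elements, k ≥ 1, and let L, M be k × Ω matrices over F with column maps τ, η : Ω → F^k (τ(i) is the i-th column of L, η(i) the i-th column of M). Let f(γ) = γL and g(γ) = γM for row vectors γ ∈ F^k. Then wt(f(γ)) = wt(g(γ)) for all γ ∈ F^k if and only if for every 1-dimensional subspace I of F^k (viewed as column space), Σ_{i : τ(i) ≠ 0, τ(i) ∈ I} ω(i) = Σ_{i : η(i) ≠ 0, η(i) ∈ I} ω(i). -/

import Mathlib

open scoped Classical
open Finset

/-- ω-weight of a vector β ∈ F^Ω. -/
noncomputable def wwt {F Ω : Type*} [Field F] [Fintype Ω] (ω : Ω → ℝ) (β : Ω → F) : ℝ :=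
  ∑ i ∈ univ.filter (fun i => β i ≠ 0), ω i

/-- ω-weight of a set A ⊆ F^Ω. -/
noncomputable def WWt {F Ω : Type*} [Field F] [Fintype Ω] (ω : Ω → ℝ) (A : Set (Ω → F)) : ℝ :=
  ∑ i ∈ univ.filter (fun i => ∃ β ∈ A, β i ≠ 0), ω i

section counting
variable {F : Type*} [Field F] [Fintype F]

lemma stmt4aux_fiber_card {G : Type*} [AddCommGroup G] [Fintype G] (f g : G →+ F)
    (h : ∀ a : F, ∃ x, f x = 0 ∧ g x = a) (a : F) :
    (univ.filter fun x => f x = 0 ∧ g x = a).card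
      = (univ.filter fun x => f x = 0 ∧ g x = 0).card := by
  obtain ⟨y, hy0, hya⟩ := h a
  apply Finset.card_nbij' (fun x => x - y) (fun x => x + y)
  · intro x hx
    simp only [mem_coe, mem_filter, mem_univ, true_and] at hx ⊢
    simp [map_sub, hx.1, hx.2, hy0, hya]
  · intro x hx
    simp only [mem_coe, mem_filter, mem_univ, true_and] at hx ⊢
    simp [map_add, hx.1, hx.2, hy0, hya]
  · intro x _; simp
  · intro x _; simp

lemma stmt4aux_count_main {G : Type*} [AddCommGroup G] [Fintype G] (f g : G →+ F)
    (h : ∀ a : F, ∃ x, f x = 0 ∧ g x = a) :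
    (univ.filter fun x => f x = 0 ∧ g x ≠ 0).card
      = (univ.filter fun x => f x = 0).card
        - (univ.filter fun x => f x = 0).card / Fintype.card F := by
  set S := univ.filter fun x : G => f x = 0 with hS
  set Z := univ.filter fun x : G => f x = 0 ∧ g x = 0 with hZ
  have key : S.card = Fintype.card F * Z.card := by
    rw [Finset.card_eq_sum_card_fiberwise (f := g) (t := univ) (fun x _ => mem_univ _)]
    have : ∀ a : F, (S.filter fun x => g x = a).card = Z.card := by
      intro a
      rw [hS, Finset.filter_filter]
      exact stmt4aux_fiber_card f g h a
    rw [Finset.sum_congr rfl fun a _ => this a]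
    simp [Finset.card_univ, mul_comm]
  have hZcard : Z.card = S.card / Fintype.card F := by
    rw [key, Nat.mul_div_cancel_left _ Fintype.card_pos]
  have hsub : (univ.filter fun x => f x = 0 ∧ g x ≠ 0) = S \ Z := by
    ext x
    simp only [mem_filter, mem_univ, true_and, mem_sdiff, hS, hZ]
    tauto
  have hZS : Z ⊆ S := by
    intro x hx
    simp only [hS, hZ, mem_filter] at hx ⊢
    exact ⟨hx.1, hx.2.1⟩
  rw [hsub, Finset.card_sdiff_of_subset hZS, hZcard]

end counting

section dot
variable {F : Type*} [Field F] {k : ℕ}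

/-- The additive hom `γ ↦ γ ⬝ᵥ v`. -/
def stmt4aux_dotHom (v : Fin k → F) : (Fin k → F) →+ F :=
  AddMonoidHom.mk' (fun γ => dotProduct γ v) (fun a b => add_dotProduct a b v)

@[simp] lemma stmt4aux_dotHom_apply (v γ : Fin k → F) :
    stmt4aux_dotHom v γ = dotProduct γ v := rfl

lemma stmt4aux_exists_dot_eq {v : Fin k → F} (hv : v ≠ 0) (a : F) :
    ∃ γ : Fin k → F, dotProduct γ v = a := by
  obtain ⟨j, hj⟩ := Function.ne_iff.mp hv
  refine ⟨(a * (v j)⁻¹) • (Pi.single j 1 : Fin k → F), ?_⟩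
  rw [smul_dotProduct, single_dotProduct]
  simp only [Pi.zero_apply] at hj
  field_simp
  rw [smul_eq_mul, div_mul_cancel₀ _ hj]

lemma stmt4aux_mem_span_of_dual {v0 w : Fin k → F} (hv : v0 ≠ 0)
    (h : ∀ γ : Fin k → F, dotProduct γ v0 = 0 → dotProduct γ w = 0) :
    w ∈ Submodule.span F {v0} := by
  obtain ⟨j, hj⟩ := Function.ne_iff.mp hv
  simp only [Pi.zero_apply] at hj
  rw [Submodule.mem_span_singleton]
  refine ⟨(v0 j)⁻¹ * w j, ?_⟩
  funext l
  have hγ : dotProduct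
      (v0 j • (Pi.single l 1 : Fin k → F) - v0 l • (Pi.single j 1 : Fin k → F)) v0 = 0 := by
    rw [sub_dotProduct, smul_dotProduct, smul_dotProduct,
      single_dotProduct, single_dotProduct]
    ring_nf
  have := h _ hγ
  rw [sub_dotProduct, smul_dotProduct, smul_dotProduct,
    single_dotProduct, single_dotProduct] at this
  simp only [one_mul, smul_eq_mul, sub_eq_zero] at this
  have : w l = (v0 j)⁻¹ * (v0 l * w j) := by
    field_simp
    linear_combination this
  rw [this]
  simp [Pi.smul_apply, smul_eq_mul]
  ring

end dot

section counts2
variable {F : Type*} [Field F] [Fintype F] {k : ℕ}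

lemma stmt4aux_count_A {v : Fin k → F} (hv : v ≠ 0) :
    (univ.filter fun γ : Fin k → F => dotProduct γ v ≠ 0).card
      = Fintype.card (Fin k → F) - Fintype.card (Fin k → F) / Fintype.card F := by
  have h := stmt4aux_count_main (0 : (Fin k → F) →+ F) (stmt4aux_dotHom v)
    (fun a => by
      obtain ⟨γ, hγ⟩ := stmt4aux_exists_dot_eq hv a
      exact ⟨γ, rfl, hγ⟩)
  have e1 : (univ.filter fun x : Fin k → F =>
      (0 : (Fin k → F) →+ F) x = 0 ∧ stmt4aux_dotHom v x ≠ 0)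
      = univ.filter (fun γ : Fin k → F => dotProduct γ v ≠ 0) := by
    apply Finset.filter_congr; intro x _; simp
  have e2 : (univ.filter fun x : Fin k → F => (0 : (Fin k → F) →+ F) x = 0) = univ := by
    apply Finset.filter_true_of_mem; intro x _; simp
  rw [e1, e2, Finset.card_univ] at h
  exact h

lemma stmt4aux_count_B {v0 w : Fin k → F} (hv0 : v0 ≠ 0) (hw : w ∉ Submodule.span F {v0}) :
    (univ.filter fun γ : Fin k → F =>
        dotProduct γ v0 = 0 ∧ dotProduct γ w ≠ 0).card
      = (univ.filter fun γ : Fin k → F => dotProduct γ v0 = 0).card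
        - (univ.filter fun γ : Fin k → F => dotProduct γ v0 = 0).card
          / Fintype.card F := by
  have hex : ∀ a : F, ∃ x : Fin k → F,
      stmt4aux_dotHom v0 x = 0 ∧ stmt4aux_dotHom w x = a := by
    intro a
    have : ¬∀ γ : Fin k → F, dotProduct γ v0 = 0 → dotProduct γ w = 0 := by
      intro hcon
      exact hw (stmt4aux_mem_span_of_dual hv0 hcon)
    push_neg at this
    obtain ⟨γ0, hγ00, hγ0w⟩ := this
    refine ⟨(a * (dotProduct γ0 w)⁻¹) • γ0, ?_, ?_⟩
    · simp only [stmt4aux_dotHom_apply, smul_dotProduct, hγ00, smul_eq_mul, mul_zero]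
    · simp only [stmt4aux_dotHom_apply, smul_dotProduct, smul_eq_mul]
      field_simp
  have h := stmt4aux_count_main (stmt4aux_dotHom v0) (stmt4aux_dotHom w) hex
  simp only [stmt4aux_dotHom_apply] at h
  convert h <;> ext x <;>
    exact ⟨fun hx => Finset.mem_filter.mpr ⟨mem_univ _, (Finset.mem_filter.mp hx).2⟩,
      fun hx => Finset.mem_filter.mpr ⟨mem_univ _, (Finset.mem_filter.mp hx).2⟩⟩

end counts2

section sumswap
variable {F Ω : Type*} [Field F] [Fintype Ω] {k : ℕ}

lemma stmt4aux_sum_wwt (ω : Ω → ℝ) (L : Matrix (Fin k) Ω F) (S : Finset (Fin k → F)) :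
    ∑ γ ∈ S, wwt ω (Matrix.vecMul γ L)
      = ∑ i : Ω, ((S.filter fun γ =>
          dotProduct γ (fun r => L r i) ≠ 0).card : ℝ) * ω i := by
  have h1 : ∀ γ : Fin k → F, wwt ω (Matrix.vecMul γ L)
      = ∑ i : Ω, if dotProduct γ (fun r => L r i) ≠ 0 then ω i else 0 := by
    intro γ
    rw [wwt, Finset.sum_filter]
    rfl
  rw [Finset.sum_congr rfl fun γ _ => h1 γ, Finset.sum_comm]
  refine Finset.sum_congr rfl fun i _ => ?_
  rw [← Finset.sum_filter, Finset.sum_const, nsmul_eq_mul]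

lemma stmt4aux_sum_card_ite (ω : Ω → ℝ) (p : Ω → Prop) [DecidablePred p] (c : ℕ)
    (n : Ω → ℕ) (hn : ∀ i, n i = if p i then c else 0) :
    ∑ i : Ω, (n i : ℝ) * ω i = (c : ℝ) * ∑ i ∈ univ.filter p, ω i := by
  rw [Finset.mul_sum, Finset.sum_filter]
  refine Finset.sum_congr rfl fun i _ => ?_
  rw [hn i]
  split <;> simp

end sumswap

theorem stmt4 {F Ω : Type*} [Field F] [Fintype F] [Fintype Ω] [Nonempty Ω]
    (q : ℕ) (hq : Fintype.card F = q)
    (ω : Ω → ℝ) (hω : ∀ i, 0 < ω i)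
    (k : ℕ) (hk : 1 ≤ k) (L M : Matrix (Fin k) Ω F) :
    (∀ γ : Fin k → F, wwt ω (Matrix.vecMul γ L) = wwt ω (Matrix.vecMul γ M)) ↔
      (∀ I : Submodule F (Fin k → F), Module.finrank F I = 1 →
        ∑ i ∈ univ.filter (fun i => (fun r => L r i) ≠ 0 ∧ (fun r => L r i) ∈ I), ω i
          = ∑ i ∈ univ.filter (fun i => (fun r => M r i) ≠ 0 ∧ (fun r => M r i) ∈ I), ω i) := by
  have hq2 : 1 < Fintype.card F := Fintype.one_lt_card
  constructor
  · -- forward direction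
    intro hwt I hI
    -- I is spanned by a nonzero vector v0
    have hprin : I.IsPrincipal := by
      rw [← Submodule.finrank_le_one_iff_isPrincipal]
      omega
    obtain ⟨v0, hIspan⟩ := hprin.principal
    have hv0 : v0 ≠ 0 := by
      rintro rfl
      rw [hIspan, Submodule.span_zero_singleton] at hI
      rw [finrank_bot] at hI
      omega
    -- Step A : total sums
    set cA : ℕ :=
      Fintype.card (Fin k → F) - Fintype.card (Fin k → F) / Fintype.card F with hcA
    have hcApos : 0 < cA := by
      have h1 : 0 < Fintype.card (Fin k → F) := Fintype.card_pos
      have := Nat.div_lt_self h1 hq2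
      omega
    have hAL : ∑ γ : Fin k → F, wwt ω (Matrix.vecMul γ L)
        = (cA : ℝ) * ∑ i ∈ univ.filter (fun i => (fun r => L r i) ≠ (0 : Fin k → F)), ω i := by
      rw [stmt4aux_sum_wwt]
      apply stmt4aux_sum_card_ite
      intro i
      by_cases hc : (fun r => L r i) = (0 : Fin k → F)
      · rw [if_neg (not_not_intro hc), Finset.card_eq_zero, Finset.filter_eq_empty_iff]
        intro γ _
        simp [hc]
      · rw [if_pos hc, stmt4aux_count_A hc]
    have hAM : ∑ γ : Fin k → F, wwt ω (Matrix.vecMul γ M)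
        = (cA : ℝ) * ∑ i ∈ univ.filter (fun i => (fun r => M r i) ≠ (0 : Fin k → F)), ω i := by
      rw [stmt4aux_sum_wwt]
      apply stmt4aux_sum_card_ite
      intro i
      by_cases hc : (fun r => M r i) = (0 : Fin k → F)
      · rw [if_neg (not_not_intro hc), Finset.card_eq_zero, Finset.filter_eq_empty_iff]
        intro γ _
        simp [hc]
      · rw [if_pos hc, stmt4aux_count_A hc]
    have hT : ∑ i ∈ univ.filter (fun i => (fun r => L r i) ≠ (0 : Fin k → F)), ω i
        = ∑ i ∈ univ.filter (fun i => (fun r => M r i) ≠ (0 : Fin k → F)), ω i := by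
      have := (Finset.sum_congr rfl fun γ _ => hwt γ :
        ∑ γ : Fin k → F, wwt ω (Matrix.vecMul γ L)
          = ∑ γ : Fin k → F, wwt ω (Matrix.vecMul γ M))
      rw [hAL, hAM] at this
      exact mul_left_cancel₀ (by exact_mod_cast hcApos.ne') this
    -- Step B : sums over the hyperplane orthogonal to v0
    set S0 : Finset (Fin k → F) :=
      univ.filter (fun γ => dotProduct γ v0 = 0) with hS0
    set c0 : ℕ := S0.card with hc0
    have hc0pos : 0 < c0 := by
      apply Finset.card_pos.mpr
      exact ⟨0, by simp [hS0, zero_dotProduct]⟩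
    set C : ℕ := c0 - c0 / Fintype.card F with hC
    have hCpos : 0 < C := by
      have := Nat.div_lt_self hc0pos hq2
      omega
    have hBcard : ∀ (N : Matrix (Fin k) Ω F) (i : Ω),
        ((S0.filter fun γ => dotProduct γ (fun r => N r i) ≠ 0).card)
          = if (fun r => N r i) ∉ I then C else 0 := by
      intro N i
      rw [hS0, Finset.filter_filter]
      by_cases hmem : (fun r => N r i) ∈ I
      · rw [if_neg (by simpa using hmem)]
        rw [Finset.card_eq_zero, Finset.filter_eq_empty_iff]
        intro γ _
        rw [hIspan, Submodule.mem_span_singleton] at hmem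
        obtain ⟨c, hc⟩ := hmem
        push_neg
        intro hγ0
        rw [← hc, dotProduct_smul, hγ0, smul_zero]
      · rw [if_pos (by simpa using hmem)]
        rw [hIspan] at hmem
        rw [stmt4aux_count_B hv0 hmem]
    have hBL : ∑ γ ∈ S0, wwt ω (Matrix.vecMul γ L)
        = (C : ℝ) * ∑ i ∈ univ.filter (fun i => (fun r => L r i) ∉ I), ω i := by
      rw [stmt4aux_sum_wwt]
      exact stmt4aux_sum_card_ite ω _ C _ (hBcard L)
    have hBM : ∑ γ ∈ S0, wwt ω (Matrix.vecMul γ M)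
        = (C : ℝ) * ∑ i ∈ univ.filter (fun i => (fun r => M r i) ∉ I), ω i := by
      rw [stmt4aux_sum_wwt]
      exact stmt4aux_sum_card_ite ω _ C _ (hBcard M)
    have hSS : ∑ i ∈ univ.filter (fun i => (fun r => L r i) ∉ I), ω i
        = ∑ i ∈ univ.filter (fun i => (fun r => M r i) ∉ I), ω i := by
      have := (Finset.sum_congr rfl fun γ _ => hwt γ :
        ∑ γ ∈ S0, wwt ω (Matrix.vecMul γ L) = ∑ γ ∈ S0, wwt ω (Matrix.vecMul γ M))
      rw [hBL, hBM] at this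
      exact mul_left_cancel₀ (by exact_mod_cast hCpos.ne') this
    -- Step C : combine
    have hsplit : ∀ (N : Matrix (Fin k) Ω F),
        ∑ i ∈ univ.filter (fun i => (fun r => N r i) ≠ (0 : Fin k → F)), ω i
          = (∑ i ∈ univ.filter (fun i => (fun r => N r i) ≠ (0 : Fin k → F)
              ∧ (fun r => N r i) ∈ I), ω i)
            + ∑ i ∈ univ.filter (fun i => (fun r => N r i) ∉ I), ω i := by
      intro N
      rw [← Finset.sum_filter_add_sum_filter_not
        (univ.filter (fun i => (fun r => N r i) ≠ (0 : Fin k → F)))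
        (fun i => (fun r => N r i) ∈ I), Finset.filter_filter, Finset.filter_filter]
      congr 2
      apply Finset.filter_congr
      intro i _
      constructor
      · exact fun h => h.2
      · intro h
        refine ⟨fun h0 => h ?_, h⟩
        rw [h0]
        exact I.zero_mem
    have h1 := hsplit L
    have h2 := hsplit M
    rw [hT, hSS] at h1
    rw [h1] at h2
    linarith
  · -- backward direction
    intro h γ
    have hwwt : ∀ (N : Matrix (Fin k) Ω F), wwt ω (Matrix.vecMul γ N)
        = ∑ i ∈ univ.filter (fun i => dotProduct γ (fun r => N r i) ≠ 0), ω i := by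
      intro N
      rw [wwt]
      rfl
    rw [hwwt L, hwwt M]
    set UL := univ.filter (fun i => dotProduct γ (fun r => L r i) ≠ 0) with hUL
    set UM := univ.filter (fun i => dotProduct γ (fun r => M r i) ≠ 0) with hUM
    set ℓL : Ω → Submodule F (Fin k → F) := fun i => Submodule.span F {fun r => L r i} with hℓL
    set ℓM : Ω → Submodule F (Fin k → F) := fun i => Submodule.span F {fun r => M r i} with hℓM
    set T : Finset (Submodule F (Fin k → F)) := UL.image ℓL ∪ UM.image ℓM with hT
    have hmapL : ∀ i ∈ UL, ℓL i ∈ T := fun i hi =>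
      Finset.mem_union_left _ (Finset.mem_image_of_mem _ hi)
    have hmapM : ∀ i ∈ UM, ℓM i ∈ T := fun i hi =>
      Finset.mem_union_right _ (Finset.mem_image_of_mem _ hi)
    rw [← Finset.sum_fiberwise_of_maps_to hmapL ω, ← Finset.sum_fiberwise_of_maps_to hmapM ω]
    refine Finset.sum_congr rfl fun I hI => ?_
    -- obtain a representative v of the line I with γ ⬝ᵥ v ≠ 0
    have hrep : ∃ v : Fin k → F, v ≠ 0 ∧ dotProduct γ v ≠ 0
        ∧ I = Submodule.span F {v} := by
      rw [hT, Finset.mem_union] at hI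
      rcases hI with hI | hI
      · obtain ⟨i, hi, rfl⟩ := Finset.mem_image.mp hI
        rw [hUL, Finset.mem_filter] at hi
        refine ⟨(fun r => L r i), ?_, hi.2, rfl⟩
        intro h0
        apply hi.2
        rw [h0, dotProduct_zero]
      · obtain ⟨i, hi, rfl⟩ := Finset.mem_image.mp hI
        rw [hUM, Finset.mem_filter] at hi
        refine ⟨(fun r => M r i), ?_, hi.2, rfl⟩
        intro h0
        apply hi.2
        rw [h0, dotProduct_zero]
    obtain ⟨v, hv0, hγv, hIv⟩ := hrep
    have hfiber : ∀ (N : Matrix (Fin k) Ω F),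
        (univ.filter (fun i => dotProduct γ (fun r => N r i) ≠ 0)).filter
            (fun i => Submodule.span F {fun r => N r i} = I)
          = univ.filter (fun i => (fun r => N r i) ≠ (0 : Fin k → F)
              ∧ (fun r => N r i) ∈ I) := by
      intro N
      rw [Finset.filter_filter]
      apply Finset.filter_congr
      intro i _
      constructor
      · rintro ⟨hdot, hspan⟩
        have hne : (fun r => N r i) ≠ (0 : Fin k → F) := by
          intro h0
          apply hdot
          rw [h0, dotProduct_zero]
        refine ⟨hne, ?_⟩
        rw [← hspan]
        exact Submodule.mem_span_singleton_self _
      · rintro ⟨hne, hmem⟩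
        rw [hIv, Submodule.mem_span_singleton] at hmem
        obtain ⟨c, hc⟩ := hmem
        have hcne : c ≠ 0 := by
          rintro rfl
          apply hne
          rw [← hc, zero_smul]
        constructor
        · intro hdot
          rw [← hc, dotProduct_smul, smul_eq_mul, mul_eq_zero] at hdot
          tauto
        · rw [hIv, ← hc]
          exact Submodule.span_singleton_smul_eq (IsUnit.mk0 c hcne) v
    have hrk : Module.finrank F I = 1 := by
      rw [hIv]
      exact finrank_span_singleton hv0
    have := h I hrk
    rw [hUL, hUM, hℓL, hℓM, hfiber L, hfiber M]
    exact this
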